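/- Let (A, ∗, ∘) be an anti-pre-Poisson algebra. Then (A, L_∗, R_∗, L_∘, R_∘) is a representation of (A, ∗, ∘), where L_∗(x)y = x∗y, R_∗(x)y = y∗x, L_∘(x)y = x∘y, R_∘(x)y = y∘x (the regular representation). -/
import Mathlib


/-- An anti-Zinbiel algebra structure on a vector space `A`. -/
def IsAntiZinbiel {k A : Type*} [Field k] [AddCommGroup A] [Module k A]
    (s : A →ₗ[k] A →ₗ[k] A) : Prop :=
  (∀ x y z, s x (s y z) = - s (s x y + s y x) z) ∧
  (∀ x y z, s x (s y z) = - s (s y z + s z y) x) ∧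
  (∀ x y z, s x (s y z) = s z (s y x)) ∧
  (∀ x y z, s z (s x y) = s x (s z y))

/-- An anti-pre-Lie algebra structure on a vector space `A`. -/
def IsAntiPreLie {k A : Type*} [Field k] [AddCommGroup A] [Module k A]
    (c : A →ₗ[k] A →ₗ[k] A) : Prop :=
  (∀ x y z, c x (c y z) - c y (c x z) = c (c y x - c x y) z) ∧
  (∀ x y z, c (c x y - c y x) z + c (c y z - c z y) x + c (c z x - c x z) y = 0)

/-- An anti-pre-Poisson algebra structure `(A, ∗, ∘)`:
an anti-Zinbiel operation `s`, an anti-pre-Lie operation `c`, and the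
three compatibility conditions. -/
def IsAntiPrePoisson {k A : Type*} [Field k] [AddCommGroup A] [Module k A]
    (s c : A →ₗ[k] A →ₗ[k] A) : Prop :=
  IsAntiZinbiel s ∧ IsAntiPreLie c ∧
  (∀ x y z, s (c x y - c y x) z = s y (c x z) - c x (s y z)) ∧
  (∀ x y z, c (s x y + s y x) z = - s x (c y z) - s y (c x z)) ∧
  (∀ x y z, c z (s x y + s y x) + s x (c y z) + s y (c x z) = s x (c z y) + s y (c z x))

/-- A representation `(V, l, r)` of an anti-Zinbiel algebra `(A, ∗)` (multiplication in
`Module.End` is composition; `l⋆ = l + r`). -/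
def IsAZRep {k A V : Type*} [Field k] [AddCommGroup A] [Module k A]
    [AddCommGroup V] [Module k V]
    (s : A →ₗ[k] A →ₗ[k] A) (l r : A → Module.End k V) : Prop :=
  IsLinearMap k l ∧ IsLinearMap k r ∧
  (∀ x y, l x * l y = - l (s x y + s y x)) ∧
  (∀ x y, l x * l y = - (r x * (l y + r y))) ∧
  (∀ x y, l x * l y = r (s y x)) ∧
  (∀ x y, l x * r y = - (r y * (l x + r x))) ∧
  (∀ x y, l x * r y = - (r x * (l y + r y))) ∧
  (∀ x y, l x * r y = l y * r x) ∧
  (∀ x y, r (s x y) = l x * r y) ∧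
  (∀ x y, l y * l x = l x * l y)

/-- A representation `(V, l, r)` of an anti-pre-Lie algebra `(A, ∘)`. -/
def IsAPLRep {k A V : Type*} [Field k] [AddCommGroup A] [Module k A]
    [AddCommGroup V] [Module k V]
    (c : A →ₗ[k] A →ₗ[k] A) (l r : A → Module.End k V) : Prop :=
  IsLinearMap k l ∧ IsLinearMap k r ∧
  (∀ x y, l (c y x) - l (c x y) = l x * l y - l y * l x) ∧
  (∀ x y, r (c x y) = l x * r y + r y * l x - r y * r x) ∧
  (∀ x y, l (c y x) - l (c x y) = r x * l y - r y * l x - r x * r y + r y * r x)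

/-- A representation `(V, ls, rs, lc, rc)` of an anti-pre-Poisson algebra `(A, ∗, ∘)`. -/
def IsAPPRep {k A V : Type*} [Field k] [AddCommGroup A] [Module k A]
    [AddCommGroup V] [Module k V]
    (s c : A →ₗ[k] A →ₗ[k] A) (ls rs lc rc : A → Module.End k V) : Prop :=
  IsAZRep s ls rs ∧ IsAPLRep c lc rc ∧
  (∀ x y, ls (c x y - c y x) = ls y * lc x - lc x * ls y) ∧
  (∀ x y, lc (s x y + s y x) = - (ls x * lc y) - ls y * lc x) ∧
  (∀ x y, rs x * (lc y - rc y) = rc (s y x) - ls y * rc x) ∧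
  (∀ x y, rc x * (ls y + rs y) = - rs (c y x) - ls y * rc x) ∧
  (∀ x y, rs x * (lc y - rc y) = rs (c y x) - lc y * rs x) ∧
  (∀ x y, rc (s x y + s y x) + ls x * lc y + ls y * lc x = ls x * rc y + ls y * rc x) ∧
  (∀ x y, lc x * (ls y + rs y) + rs (c y x) + ls y * rc x = ls y * lc x + rs (c x y))

/-- the regular representation `(A, L_∗, R_∗, L_∘, R_∘)` of an
anti-pre-Poisson algebra `(A, ∗, ∘)` is a representation. -/
theorem regular_rep_antiPrePoisson {k A : Type*} [Field k] [AddCommGroup A] [Module k A]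
    (s c : A →ₗ[k] A →ₗ[k] A) (h : IsAntiPrePoisson s c) :
    IsAPPRep (V := A) s c
      (fun x => s x) (fun x => s.flip x) (fun x => c x) (fun x => c.flip x) := by

  obtain ⟨⟨hA1, hA2, hA3, hA4⟩, ⟨hP1, hP2⟩, hC1, hC2, hC3⟩ := h
  simp only [map_add, map_sub, map_neg, LinearMap.add_apply, LinearMap.sub_apply,
    LinearMap.neg_apply] at hA1 hA2 hA3 hA4 hP1 hP2 hC1 hC2 hC3
  refine ⟨⟨⟨fun a b => by ext z; simp, fun r a => by ext z; simp⟩,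
    ⟨fun a b => by ext z; simp, fun r a => by ext z; simp⟩,
    ?_, ?_, ?_, ?_, ?_, ?_, ?_, ?_⟩,
    ⟨⟨fun a b => by ext z; simp, fun r a => by ext z; simp⟩,
    ⟨fun a b => by ext z; simp, fun r a => by ext z; simp⟩,
    ?_, ?_, ?_⟩, ?_, ?_, ?_, ?_, ?_, ?_, ?_⟩ <;>
  intro x y <;> ext z <;>
  simp only [Module.End.mul_apply, LinearMap.add_apply,
    LinearMap.sub_apply, LinearMap.neg_apply, LinearMap.flip_apply, map_add, map_sub,
    map_neg]
  · linear_combination (norm := abel) hA1 x y z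
  · linear_combination (norm := abel) hA2 x y z
  · linear_combination (norm := abel) hA2 x y z - hA1 z y x
  · linear_combination (norm := abel) hA1 x z y
  · linear_combination (norm := abel) hA2 x z y
  · linear_combination (norm := abel) hA2 x z y - hA1 y z x
  · linear_combination (norm := abel) hA1 z x y - hA1 x z y
  · linear_combination (norm := abel) hA1 y x z - hA1 x y z
  · linear_combination (norm := abel) - hP1 x y z
  · linear_combination (norm := abel) - hP1 x z y
  · linear_combination (norm := abel) - hP2 x y z
  · linear_combination (norm := abel) hC1 x y z
  · linear_combination (norm := abel) hC2 x y z
  · linear_combination (norm := abel) - hC1 z y x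
  · linear_combination (norm := abel) hC2 y z x
  · linear_combination (norm := abel) hC1 y z x
  · linear_combination (norm := abel) hC3 x y z
  · linear_combination (norm := abel) hC3 y z x
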